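/- Let A be a Φ-ring and M an A-module such that for every admissible ideal I the natural map M → Hom_A(I, M) (m ↦ (x ↦ xm)) is bijective. Then for every admissible ideal I = (f_1,...,f_r), the first local cohomology H^1_I(M) vanishes. -/
import Mathlib


/-- A ring with constructible supports (a `Φ`-ring): a commutative ring together with a
family of finitely generated ideals (the *admissible* ideals) containing the unit ideal,
stable under products, and such that any finitely generated ideal containing an admissible
ideal is admissible. -/
structure PhiRing (A : Type*) [CommRing A] where
  adm : Set (Ideal A)
  fg_of_mem : ∀ I ∈ adm, I.FG
  top_mem : ⊤ ∈ adm
  mul_mem : ∀ I ∈ adm, ∀ J ∈ adm, I * J ∈ adm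
  enlarge_mem : ∀ I ∈ adm, ∀ J : Ideal A, J.FG → I ≤ J → J ∈ adm

/-- The multiplicative set of elements of `A` generating an admissible ideal. -/
def PhiRing.S {A : Type*} [CommRing A] (Φ : PhiRing A) : Submonoid A where
  carrier := {a : A | Ideal.span {a} ∈ Φ.adm}
  one_mem' := by
    show Ideal.span {(1 : A)} ∈ Φ.adm
    rw [Ideal.span_singleton_one]
    exact Φ.top_mem
  mul_mem' := by
    intro a b ha hb
    show Ideal.span {a * b} ∈ Φ.adm
    rw [← Ideal.span_singleton_mul_span_singleton]
    exact Φ.mul_mem _ ha _ hb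

/-- `A` is `Φ`-local if (it is local and) every admissible ideal is invertible;
in a local ring, an ideal is invertible iff it is generated by a single nonzerodivisor. -/
def PhiRing.IsPhiLocal {A : Type*} [CommRing A] (Φ : PhiRing A) : Prop :=
  ∀ I ∈ Φ.adm, ∃ a ∈ nonZeroDivisors A, I = Ideal.span {a}

section

variable {A : Type*} [CommRing A] (M : Type*) [AddCommGroup M] [Module A M]

/-- Powers of `a` act invertibly on the localization of `M` away from `a * b`. -/
lemma pow_isUnit_end_left (a b : A) (x : ↥(Submonoid.powers a)) :
    IsUnit (algebraMap A (Module.End A (LocalizedModule (Submonoid.powers (a * b)) M))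
      (x : A)) := by
  obtain ⟨n, hn⟩ := x.2
  have h := IsLocalizedModule.map_units
    (LocalizedModule.mkLinearMap (Submonoid.powers (a * b)) M)
    (⟨(a * b) ^ n, ⟨n, rfl⟩⟩ : Submonoid.powers (a * b))
  have h' : IsUnit (algebraMap A
      (Module.End A (LocalizedModule (Submonoid.powers (a * b)) M)) ((a * b) ^ n)) := h
  rw [mul_pow, map_mul] at h'
  rw [← hn]
  have hc : Commute
      ((algebraMap A (Module.End A (LocalizedModule (Submonoid.powers (a * b)) M))) (a ^ n))
      ((algebraMap A (Module.End A (LocalizedModule (Submonoid.powers (a * b)) M))) (b ^ n)) :=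
    (Commute.all (a ^ n) (b ^ n)).map
      (algebraMap A (Module.End A (LocalizedModule (Submonoid.powers (a * b)) M)))
  exact (hc.isUnit_mul_iff.mp h').1

/-- Powers of `b` act invertibly on the localization of `M` away from `a * b`. -/
lemma pow_isUnit_end_right (a b : A) (x : ↥(Submonoid.powers b)) :
    IsUnit (algebraMap A (Module.End A (LocalizedModule (Submonoid.powers (a * b)) M))
      (x : A)) := by
  obtain ⟨n, hn⟩ := x.2
  have h := IsLocalizedModule.map_units
    (LocalizedModule.mkLinearMap (Submonoid.powers (a * b)) M)
    (⟨(a * b) ^ n, ⟨n, rfl⟩⟩ : Submonoid.powers (a * b))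
  have h' : IsUnit (algebraMap A
      (Module.End A (LocalizedModule (Submonoid.powers (a * b)) M)) ((a * b) ^ n)) := h
  rw [mul_pow, map_mul] at h'
  rw [← hn]
  have hc : Commute
      ((algebraMap A (Module.End A (LocalizedModule (Submonoid.powers (a * b)) M))) (a ^ n))
      ((algebraMap A (Module.End A (LocalizedModule (Submonoid.powers (a * b)) M))) (b ^ n)) :=
    (Commute.all (a ^ n) (b ^ n)).map
      (algebraMap A (Module.End A (LocalizedModule (Submonoid.powers (a * b)) M)))
  exact (hc.isUnit_mul_iff.mp h').2

/-- The canonical map `M[1/a] → M[1/(a*b)]`. -/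
noncomputable def locMapLeft (a b : A) :
    LocalizedModule (Submonoid.powers a) M →ₗ[A]
      LocalizedModule (Submonoid.powers (a * b)) M :=
  LocalizedModule.lift (Submonoid.powers a)
    (LocalizedModule.mkLinearMap (Submonoid.powers (a * b)) M)
    (pow_isUnit_end_left M a b)

/-- The canonical map `M[1/b] → M[1/(a*b)]`. -/
noncomputable def locMapRight (a b : A) :
    LocalizedModule (Submonoid.powers b) M →ₗ[A]
      LocalizedModule (Submonoid.powers (a * b)) M :=
  LocalizedModule.lift (Submonoid.powers b)
    (LocalizedModule.mkLinearMap (Submonoid.powers (a * b)) M)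
    (pow_isUnit_end_right M a b)

/-- The natural map `M → Hom_A(I, M)`, `m ↦ (x ↦ x • m)`. -/
@[simps] def smulHom (I : Ideal A) (m : M) : ↥I →ₗ[A] M where
  toFun x := (x : A) • m
  map_add' x y := by simp [add_smul]
  map_smul' a x := by simp [mul_smul]

end

/-- Let `A` be a `Φ`-ring and `M` an `A`-module such that for every admissible ideal `I`
the natural map `M → Hom_A(I, M)` is bijective.  Then for every admissible ideal
`I = (f 1, ..., f r)` the first local cohomology `H^1_I(M)` vanishes: computing `H^1` by
the Čech complex `0 → M → ∏_i M[1/f i] → ∏_{i<j} M[1/(f i * f j)] → ⋯`, every `1`-cocycle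
`c` is the boundary of some `m ∈ M`. -/
theorem cech_H1_vanishes_of_twoDeep
    {A : Type*} [CommRing A] (Φ : PhiRing A)
    (M : Type*) [AddCommGroup M] [Module A M]
    (hM : ∀ I ∈ Φ.adm, Function.Bijective (fun m : M => smulHom M I m))
    (r : ℕ) (f : Fin r → A) (hadm : Ideal.span (Set.range f) ∈ Φ.adm)
    (c : ∀ i : Fin r, LocalizedModule (Submonoid.powers (f i)) M)
    (hc : ∀ i j : Fin r, locMapLeft M (f i) (f j) (c i) = locMapRight M (f i) (f j) (c j)) :
    ∃ m : M, ∀ i : Fin r,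
      LocalizedModule.mkLinearMap (Submonoid.powers (f i)) M m = c i := by
  classical
  -- Step 1: choose representatives
  have h1 : ∀ i, ∃ (m₀ : M) (n : ℕ),
      c i = LocalizedModule.mk m₀ (⟨f i ^ n, n, rfl⟩ : Submonoid.powers (f i)) := by
    intro i
    induction c i using LocalizedModule.induction_on with
    | h m₀ s =>
      obtain ⟨n, hn⟩ := s.2
      exact ⟨m₀, n, by congr 1; exact Subtype.ext hn.symm⟩
  choose m₀ n₀ hmn using h1
  set n := Finset.univ.sup n₀ with hn
  have hm'ex : ∀ i, ∃ m₁ : M, m₁ = f i ^ (n - n₀ i) • m₀ i := fun i => ⟨_, rfl⟩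
  choose m' hm' using hm'ex
  have hrep : ∀ i, c i = LocalizedModule.mk (m' i)
      (⟨f i ^ n, n, rfl⟩ : Submonoid.powers (f i)) := by
    intro i
    rw [hmn i, LocalizedModule.mk_eq]
    refine ⟨1, ?_⟩
    have hle : n₀ i ≤ n := Finset.le_sup (Finset.mem_univ i)
    simp only [one_smul, Submonoid.smul_def, hm', smul_smul, ← pow_add]
    congr 2
    omega
  -- Step 2: translate the cocycle condition into equations in M
  have hleft : ∀ i j : Fin r, f i ^ n • locMapLeft M (f i) (f j) (c i)
      = LocalizedModule.mk (m' i) (1 : Submonoid.powers (f i * f j)) := by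
    intro i j
    rw [hrep i, ← map_smul]
    have e : (f i ^ n • LocalizedModule.mk (m' i)
        (⟨f i ^ n, n, rfl⟩ : Submonoid.powers (f i)))
        = LocalizedModule.mkLinearMap (Submonoid.powers (f i)) M (m' i) := by
      rw [LocalizedModule.smul'_mk, LocalizedModule.mkLinearMap_apply,
        LocalizedModule.mk_eq]
      exact ⟨1, by simp [Submonoid.smul_def]⟩
    rw [e]
    have h := DFunLike.congr_fun
      (LocalizedModule.lift_comp (Submonoid.powers (f i))
        (LocalizedModule.mkLinearMap (Submonoid.powers (f i * f j)) M)
        (pow_isUnit_end_left M (f i) (f j))) (m' i)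
    simpa [locMapLeft, LocalizedModule.mkLinearMap_apply] using h
  have hright : ∀ i j : Fin r, f j ^ n • locMapRight M (f i) (f j) (c j)
      = LocalizedModule.mk (m' j) (1 : Submonoid.powers (f i * f j)) := by
    intro i j
    rw [hrep j, ← map_smul]
    have e : (f j ^ n • LocalizedModule.mk (m' j)
        (⟨f j ^ n, n, rfl⟩ : Submonoid.powers (f j)))
        = LocalizedModule.mkLinearMap (Submonoid.powers (f j)) M (m' j) := by
      rw [LocalizedModule.smul'_mk, LocalizedModule.mkLinearMap_apply,
        LocalizedModule.mk_eq]
      exact ⟨1, by simp [Submonoid.smul_def]⟩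
    rw [e]
    have h := DFunLike.congr_fun
      (LocalizedModule.lift_comp (Submonoid.powers (f j))
        (LocalizedModule.mkLinearMap (Submonoid.powers (f i * f j)) M)
        (pow_isUnit_end_right M (f i) (f j))) (m' j)
    simpa [locMapRight, LocalizedModule.mkLinearMap_apply] using h
  have h2 : ∀ i j, ∃ Nij : ℕ,
      (f i * f j) ^ Nij • f j ^ n • m' i = (f i * f j) ^ Nij • f i ^ n • m' j := by
    intro i j
    have e : (LocalizedModule.mk (f j ^ n • m' i) (1 : Submonoid.powers (f i * f j)))
        = LocalizedModule.mk (f i ^ n • m' j) (1 : Submonoid.powers (f i * f j)) := by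
      calc LocalizedModule.mk (f j ^ n • m' i) (1 : Submonoid.powers (f i * f j))
          = f j ^ n • LocalizedModule.mk (m' i) (1 : Submonoid.powers (f i * f j)) :=
            (LocalizedModule.smul'_mk _ _ _).symm
        _ = f j ^ n • (f i ^ n • locMapLeft M (f i) (f j) (c i)) := by rw [hleft i j]
        _ = f i ^ n • (f j ^ n • locMapRight M (f i) (f j) (c j)) := by
            rw [hc i j, smul_comm]
        _ = f i ^ n • LocalizedModule.mk (m' j) (1 : Submonoid.powers (f i * f j)) := by
            rw [hright i j]
        _ = LocalizedModule.mk (f i ^ n • m' j) (1 : Submonoid.powers (f i * f j)) :=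
            LocalizedModule.smul'_mk _ _ _
    rw [LocalizedModule.mk_eq] at e
    obtain ⟨u, hu⟩ := e
    obtain ⟨Nij, hNij⟩ := u.2
    refine ⟨Nij, ?_⟩
    have hNij' : (f i * f j) ^ Nij = (u : A) := hNij
    rw [hNij']
    simpa [Submonoid.smul_def] using hu
  choose N₀ hN₀ using h2
  set N := Finset.univ.sup (fun i => Finset.univ.sup (N₀ i)) with hNdef
  set k := n + N with hk
  have haex : ∀ i, ∃ a₁ : M, a₁ = f i ^ N • m' i := fun i => ⟨_, rfl⟩
  choose a ha using haex
  have hcompat : ∀ i j, (f i * f j) ^ N • f j ^ n • m' i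
      = (f i * f j) ^ N • f i ^ n • m' j := by
    intro i j
    have hle : N₀ i j ≤ N :=
      le_trans (Finset.le_sup (Finset.mem_univ j))
        (Finset.le_sup (f := fun i => Finset.univ.sup (N₀ i)) (Finset.mem_univ i))
    rw [show (f i * f j) ^ N = (f i * f j) ^ (N - N₀ i j) * (f i * f j) ^ (N₀ i j) from by
      rw [← pow_add, Nat.sub_add_cancel hle], mul_smul, mul_smul, hN₀ i j]
  have hkey : ∀ i j, f j ^ k • a i = f i ^ k • a j := by
    intro i j
    have e1 : f j ^ k • a i = ((f i * f j) ^ N * f j ^ n) • m' i := by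
      rw [ha, smul_smul]
      congr 1
      rw [hk]; ring
    have e2 : f i ^ k • a j = ((f i * f j) ^ N * f i ^ n) • m' j := by
      rw [ha, smul_smul]
      congr 1
      rw [hk]; ring
    rw [e1, e2, ← smul_smul, ← smul_smul, hcompat i j]
  -- Step 3: the ideal J = (f i ^ k) is admissible
  set J := Ideal.span (Set.range fun i => f i ^ k) with hJ
  have hJfg : J.FG := Submodule.fg_span (Set.finite_range _)
  have hJadm : J ∈ Φ.adm := by
    have hpow : ∀ s : ℕ, Ideal.span (Set.range f) ^ (s + 1) ∈ Φ.adm := by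
      intro s
      induction s with
      | zero => simpa using hadm
      | succ s ih => rw [pow_succ]; exact Φ.mul_mem _ ih _ hadm
    have hle : Ideal.span (Set.range f) ≤ J.radical := by
      rw [Ideal.span_le]
      rintro x ⟨i, rfl⟩
      exact Ideal.mem_radical_of_pow_mem (m := k)
        (Ideal.le_radical (Ideal.subset_span ⟨i, rfl⟩))
    obtain ⟨s, hs⟩ := Ideal.exists_pow_le_of_le_radical_of_fg hle
      (Submodule.fg_span (Set.finite_range f))
    exact Φ.enlarge_mem _ (hpow s) J hJfg
      (le_trans (Ideal.pow_le_pow_right (Nat.le_succ s)) hs)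
  -- Step 4: M has no J-torsion
  have hinj : ∀ z : M, (∀ i, f i ^ k • z = 0) → z = 0 := by
    intro z hz
    have h0 : smulHom M J z = smulHom M J 0 := by
      ext x
      obtain ⟨x, hx⟩ := x
      simp only [smulHom_apply, smul_zero]
      induction hx using Submodule.span_induction with
      | mem x hx => obtain ⟨i, rfl⟩ := hx; exact hz i
      | zero => simp
      | add x y _ _ hx hy => rw [add_smul, hx, hy, add_zero]
      | smul b x _ hx => rw [smul_eq_mul, mul_smul, hx, smul_zero]
    exact (hM J hJadm).1 h0
  -- Step 5: well-definedness of the would-be hom J → M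
  have hG : ∀ t t' : Fin r → A, (∑ i, t i • f i ^ k) = (∑ i, t' i • f i ^ k) →
      (∑ i, t i • a i) = (∑ i, t' i • a i) := by
    intro t t' ht
    have hz : ∀ j, f j ^ k • ((∑ i, t i • a i) - (∑ i, t' i • a i)) = 0 := by
      intro j
      have e : ∀ u : Fin r → A, f j ^ k • (∑ i, u i • a i)
          = (∑ i, u i • f i ^ k) • a j := by
        intro u
        rw [Finset.smul_sum, Finset.sum_smul]
        refine Finset.sum_congr rfl fun i _ => ?_
        rw [smul_comm (f j ^ k) (u i), hkey i j, smul_smul, smul_eq_mul]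
      rw [smul_sub, e t, e t', ht, sub_self]
    exact sub_eq_zero.mp (hinj _ hz)
  -- Step 6: construct the hom φ : J → M and obtain m
  have hrep2 : ∀ x : ↥J, ∃ t : Fin r → A, (∑ i, t i • f i ^ k) = (x : A) := by
    intro x
    exact (Submodule.mem_span_range_iff_exists_fun A).mp x.2
  choose rep hrepspec using hrep2
  set φ : ↥J →ₗ[A] M :=
    { toFun := fun x => ∑ i, rep x i • a i
      map_add' := by
        intro x y
        have e : (∑ i, rep (x + y) i • f i ^ k)
            = (∑ i, (rep x + rep y) i • f i ^ k) := by
          calc (∑ i, rep (x + y) i • f i ^ k) = ((x + y : ↥J) : A) := hrepspec _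
            _ = ((x : ↥J) : A) + ((y : ↥J) : A) := rfl
            _ = (∑ i, rep x i • f i ^ k) + ∑ i, rep y i • f i ^ k := by
                rw [hrepspec, hrepspec]
            _ = ∑ i, (rep x + rep y) i • f i ^ k := by
                rw [← Finset.sum_add_distrib]
                exact Finset.sum_congr rfl fun i _ => by simp [add_smul, add_mul]
        show (∑ i, rep (x + y) i • a i)
            = (∑ i, rep x i • a i) + ∑ i, rep y i • a i
        rw [hG _ _ e]
        simp [add_smul, Finset.sum_add_distrib]
      map_smul' := by
        intro b x
        have e : (∑ i, rep (b • x) i • f i ^ k)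
            = (∑ i, (b • rep x) i • f i ^ k) := by
          calc (∑ i, rep (b • x) i • f i ^ k) = ((b • x : ↥J) : A) := hrepspec _
            _ = b • ((x : ↥J) : A) := rfl
            _ = b • ∑ i, rep x i • f i ^ k := by rw [hrepspec]
            _ = ∑ i, (b • rep x) i • f i ^ k := by
                rw [Finset.smul_sum]
                exact Finset.sum_congr rfl fun i _ => by simp [smul_smul, mul_assoc]
        show (∑ i, rep (b • x) i • a i) = b • ∑ i, rep x i • a i
        rw [hG _ _ e]
        simp [Finset.smul_sum, smul_smul] } with hφ
  obtain ⟨m, hm⟩ := (hM J hJadm).2 φ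
  refine ⟨m, fun i => ?_⟩
  -- Step 7: conclude
  have hmem : f i ^ k ∈ J := Ideal.subset_span ⟨i, rfl⟩
  have hik : f i ^ k • m = a i := by
    have h := DFunLike.congr_fun hm (⟨f i ^ k, hmem⟩ : ↥J)
    have e : (∑ j, rep ⟨f i ^ k, hmem⟩ j • f j ^ k)
        = (∑ j, (Pi.single i (1 : A) : Fin r → A) j • f j ^ k) := by
      rw [hrepspec]
      simp [Pi.single_apply, ite_smul, Finset.sum_ite_eq']
    have h2' := hG _ _ e
    simp only [smulHom_apply] at h
    rw [h]
    calc φ ⟨f i ^ k, hmem⟩ = ∑ j, rep ⟨f i ^ k, hmem⟩ j • a j := rfl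
      _ = ∑ j, (Pi.single i (1 : A) : Fin r → A) j • a j := h2'
      _ = a i := by simp [Pi.single_apply, ite_smul, Finset.sum_ite_eq']
  rw [hrep i, LocalizedModule.mkLinearMap_apply, LocalizedModule.mk_eq]
  refine ⟨⟨f i ^ N, N, rfl⟩, ?_⟩
  simp only [Submonoid.smul_def, one_smul, smul_smul, ← pow_add]
  rw [show N + n = k from by rw [hk]; ring]
  rw [hik, ha]
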